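/- arXiv:1605.01105 — 2 statements merged into one kernel-verified Lean document; each statement's English description precedes it below -/
import Mathlib

section
/- Let C_0 be an [n,t] linear code over F_q with generator matrix G_0, and let C be a subcode that is a maximally recoverable subcode of C_0 with dim C = k < t. Let S ⊆ [n] with |S| = k - x for some 1 ≤ x ≤ k-1 satisfy rank(G_0|_S) = k - x. Then there exists a set S' ⊆ [n] disjoint from S with |S'| = x such that rank(G_0|_{S∪S'}) = k, and consequently rank(G|_S) = k - x for a generator matrix G of C. -/
open Matrix

section Defs
variable {F : Type*} [Field F]

/-- Rank of the submatrix of `G` consisting of the columns indexed by `S`. -/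
noncomputable def colRank {m α : Type*} [Fintype α] (G : Matrix m α F) (S : Finset α) : ℕ :=
  (G.submatrix id (fun j : S => (j : α))).rank

/-- The row space of a matrix. -/
def rowSpan {m α : Type*} (G : Matrix m α F) : Submodule F (α → F) :=
  Submodule.span F (Set.range fun i => G i)

/-- Rank of the restriction (puncturing) of a code `C` to the coordinates in `S`. -/
noncomputable def restrRank {α : Type*} (C : Submodule F (α → F)) (S : Finset α) : ℕ :=
  Module.finrank F (C.map (LinearMap.funLeft F F (fun j : S => (j : α))))

/-- Shortening of a code on coordinates `α ⊕ β` to the coordinates `α`. -/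
noncomputable def shortenSum {α β : Type*} (D : Submodule F ((α ⊕ β) → F)) :
    Submodule F (α → F) :=
  Submodule.map (LinearMap.funLeft F F Sum.inl)
    (D ⊓ (⨅ j : β, LinearMap.ker
      (LinearMap.proj (R := F) (Sum.inr j) : ((α ⊕ β) → F) →ₗ[F] F)))

/-- A valid (zero-error, worst case) scheme for the point-to-point function-update problem. -/
def IsValidScheme [DecidableEq F] {n m ℓ : ℕ} (A : Matrix (Fin m) (Fin n) F)
    (H : Matrix (Fin ℓ) (Fin n) F) (ε : ℕ)
    (D : (Fin ℓ → F) → (Fin m → F) → (Fin m → F)) : Prop :=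
  ∀ X E : Fin n → F, hammingNorm E ≤ ε →
    D (H.mulVec (X + E)) (A.mulVec X) = A.mulVec (X + E)

end Defs
section Work
variable {F : Type*} [Field F]

lemma colRank_eq {m : Type*} {n : ℕ} (G : Matrix m (Fin n) F) (S : Finset (Fin n)) :
    colRank G S = Module.finrank F (Submodule.span F (G.transpose '' ↑S)) := by
  rw [colRank, Matrix.rank_eq_finrank_span_cols]
  have hr : Set.range (G.submatrix id (fun j : S => (j : Fin n)))ᵀ = Gᵀ '' ↑S := by
    ext v
    constructor
    · rintro ⟨j, rfl⟩; exact ⟨(j : Fin n), j.2, rfl⟩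
    · rintro ⟨i, hi, rfl⟩; exact ⟨⟨i, hi⟩, rfl⟩
  exact congrArg (fun s => Module.finrank F (Submodule.span F s)) hr

lemma colRank_le_card {m : Type*} {n : ℕ} (G : Matrix m (Fin n) F) (S : Finset (Fin n)) :
    colRank G S ≤ S.card := by
  classical
  rw [colRank_eq, ← Finset.coe_image (f := Gᵀ)]
  exact (finrank_span_finset_le_card _).trans Finset.card_image_le

lemma colRank_extend {t n : ℕ} (G0 : Matrix (Fin t) (Fin n) F) (U : Finset (Fin n))
    (h : colRank G0 U < G0.rank) :
    ∃ j ∉ U, colRank G0 (insert j U) = colRank G0 U + 1 := by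
  classical
  rw [colRank_eq] at h
  obtain ⟨j, hj⟩ : ∃ j, G0ᵀ j ∉ Submodule.span F (G0ᵀ '' ↑U) := by
    by_contra hc
    push_neg at hc
    have hle : Submodule.span F (Set.range G0ᵀ) ≤ Submodule.span F (G0ᵀ '' ↑U) :=
      Submodule.span_le.mpr (by rintro _ ⟨j, rfl⟩; exact hc j)
    have := Submodule.finrank_mono hle
    have h' : G0.rank = Module.finrank F (Submodule.span F (Set.range G0ᵀ)) :=
      Matrix.rank_eq_finrank_span_cols G0
    omega
  have hjU : j ∉ U := fun hm => hj (Submodule.subset_span ⟨j, hm, rfl⟩)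
  refine ⟨j, hjU, ?_⟩
  rw [colRank_eq, colRank_eq]
  have himg : G0ᵀ '' ↑(insert j U) = insert (G0ᵀ j) (G0ᵀ '' ↑U) := by
    rw [Finset.coe_insert]; exact Set.image_insert_eq
  rw [himg]
  have hlt : Submodule.span F (G0ᵀ '' ↑U)
      < Submodule.span F (insert (G0ᵀ j) (G0ᵀ '' ↑U)) := by
    refine lt_of_le_of_ne (Submodule.span_mono (Set.subset_insert _ _)) fun he => ?_
    exact hj (he ▸ Submodule.subset_span (Set.mem_insert _ _))
  have h1 := Submodule.finrank_lt_finrank_of_lt hlt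
  have h2 : Module.finrank F (Submodule.span F (insert (G0ᵀ j) (G0ᵀ '' ↑U)))
      ≤ 1 + Module.finrank F (Submodule.span F (G0ᵀ '' ↑U)) := by
    rw [Submodule.span_insert]
    refine (Submodule.finrank_add_le_finrank_add_finrank _ _).trans ?_
    have : Module.finrank F (F ∙ G0ᵀ j) ≤ 1 := by
      simpa using finrank_span_le_card (R := F) ({G0ᵀ j} : Set (Fin t → F))
    omega
  omega

end Work

/-- if `C` is a `k`-dimensional MRSC of `C₀` with `k < t`, and `S` has
size `k - x` (`1 ≤ x ≤ k-1`) with `rank(G0|_S) = k - x`, then `S` can be completed by a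
disjoint `S'` of size `x` to a set of full column rank `k` of `G0`, and consequently
`rank(G|_S) = k - x`. -/
theorem mrsc_partial_rank {F : Type*} [Field F] [Fintype F] {n t k x : ℕ}
    (hkt : k < t)
    (G0 : Matrix (Fin t) (Fin n) F) (G : Matrix (Fin k) (Fin n) F)
    (hG0 : G0.rank = t) (hG : G.rank = k)
    (hsub : ∀ i, G i ∈ rowSpan G0)
    (hmrsc : ∀ S : Finset (Fin n), S.card = k → colRank G0 S = k → colRank G S = k)
    (hx1 : 1 ≤ x) (hx2 : x ≤ k - 1)
    (S : Finset (Fin n)) (hS : S.card = k - x) (hrk : colRank G0 S = k - x) :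
    (∃ S' : Finset (Fin n), Disjoint S S' ∧ S'.card = x ∧ colRank G0 (S ∪ S') = k) ∧
      colRank G S = k - x := by
  classical
  have key : ∀ m : ℕ, m ≤ x → ∃ S' : Finset (Fin n),
      Disjoint S S' ∧ S'.card = m ∧ colRank G0 (S ∪ S') = (k - x) + m := by
    intro m
    induction m with
    | zero =>
      intro _
      exact ⟨∅, Finset.disjoint_empty_right _, rfl, by simpa using hrk⟩
    | succ m ih =>
      intro hm
      obtain ⟨S', hd, hc, hr⟩ := ih (Nat.le_of_succ_le hm)
      have hlt : colRank G0 (S ∪ S') < G0.rank := by rw [hG0, hr]; omega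
      obtain ⟨j, hj, hji⟩ := colRank_extend G0 (S ∪ S') hlt
      refine ⟨insert j S', ?_, ?_, ?_⟩
      · exact Finset.disjoint_insert_right.mpr
          ⟨fun h => hj (Finset.mem_union_left _ h), hd⟩
      · rw [Finset.card_insert_of_notMem (fun h => hj (Finset.mem_union_right _ h)), hc]
      · have hu : S ∪ insert j S' = insert j (S ∪ S') := by
          ext a
          simp only [Finset.mem_insert, Finset.mem_union]
          tauto
        rw [hu, hji, hr]; omega
  obtain ⟨S', hd, hc, hr⟩ := key x le_rfl
  have hxk : x ≤ k := le_trans hx2 (Nat.sub_le k 1)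
  have hrk' : colRank G0 (S ∪ S') = k := by rw [hr]; omega
  have hcard : (S ∪ S').card = k := by
    rw [Finset.card_union_of_disjoint hd, hS, hc]; omega
  have hGk := hmrsc _ hcard hrk'
  refine ⟨⟨S', hd, hc, hrk'⟩, ?_⟩
  have h1 : colRank G S ≤ k - x := hS ▸ colRank_le_card G S
  have h2 : k ≤ colRank G S + x := by
    rw [colRank_eq] at hGk
    have himg : Gᵀ '' ↑(S ∪ S') = (Gᵀ '' ↑S) ∪ (Gᵀ '' ↑S') := by
      rw [Finset.coe_union]; exact Set.image_union _ _ _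
    rw [himg, Submodule.span_union] at hGk
    have hsup := Submodule.finrank_add_le_finrank_add_finrank
      (Submodule.span F (Gᵀ '' ↑S)) (Submodule.span F (Gᵀ '' ↑S'))
    have h3 : Module.finrank F (Submodule.span F (Gᵀ '' ↑S')) ≤ x := by
      rw [← Finset.coe_image (f := Gᵀ)]
      exact (finrank_span_finset_le_card _).trans (Finset.card_image_le.trans (le_of_eq hc))
    have h4 : colRank G S = Module.finrank F (Submodule.span F (Gᵀ '' ↑S)) := colRank_eq G S
    omega
  omega
end

section
/- Let C_0 be an [n,t] linear code over F_q, Δ < t, and suppose there exists an [n, k = t-Δ] maximally recoverable subcode C of C_0. Then there exists an [n+Δ, t] extension code C_0^{(e)} of C_0, with generator matrix [G_0 | Q'] for some t×Δ matrix Q', such that for every S ⊆ [n] with |S| = t - Δ, rank(G_0^{(e)}|_{S ∪ {n+1,...,n+Δ}}) = rank(G_0|_S) + Δ. -/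
open Matrix

open Submodule Module
section Aux
variable {F : Type*} [Field F]

lemma range_submatrix_mulVecLin {t n : ℕ} (A : Matrix (Fin t) (Fin n) F) (S : Finset (Fin n)) :
    LinearMap.range (A.submatrix id (fun j : S => (j : Fin n))).mulVecLin =
      Submodule.span F (Aᵀ '' ↑S) := by
  rw [Matrix.range_mulVecLin]
  congr 1
  ext v
  constructor
  · rintro ⟨j, rfl⟩
    exact ⟨(j : Fin n), j.2, rfl⟩
  · rintro ⟨i, hi, rfl⟩
    exact ⟨⟨i, hi⟩, rfl⟩
end Aux

section Aux2
variable {F : Type*} [Field F]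

lemma range_fromColumns_mulVecLin {t : ℕ} {α β : Type*} [Fintype α] [Fintype β]
    (A : Matrix (Fin t) α F) (B : Matrix (Fin t) β F) :
    LinearMap.range (fromCols A B).mulVecLin =
      LinearMap.range A.mulVecLin ⊔ LinearMap.range B.mulVecLin := by
  rw [Matrix.range_mulVecLin, Matrix.range_mulVecLin, Matrix.range_mulVecLin]
  simp only [Matrix.col]
  rw [transpose_fromCols, ← Submodule.span_union]
  congr 1
  exact Set.Sum.elim_range _ _

lemma finrank_map_add {V W : Type*} [AddCommGroup V] [Module F V] [FiniteDimensional F V]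
    [AddCommGroup W] [Module F W] (f : V →ₗ[F] W) (U : Submodule F V) :
    finrank F (U.map f) + finrank F (U ⊓ LinearMap.ker f : Submodule F V) = finrank F U := by
  have h := LinearMap.finrank_range_add_finrank_ker (f.domRestrict U)
  rw [LinearMap.range_domRestrict, LinearMap.ker_domRestrict] at h
  have h2 : comap U.subtype (LinearMap.ker f) = comap U.subtype (U ⊓ LinearMap.ker f) := by
    rw [Submodule.comap_inf, Submodule.comap_subtype_self, top_inf_eq]
  rw [h2, (Submodule.comapSubtypeEquivOfLe (inf_le_left : U ⊓ LinearMap.ker f ≤ U)).finrank_eq] at h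
  exact h

end Aux2

section Aux3
variable {F : Type*} [Field F]

lemma colRank_eq_finrank_span' {t n : ℕ} (A : Matrix (Fin t) (Fin n) F) (S : Finset (Fin n)) :
    colRank A S = finrank F (Submodule.span F (Aᵀ '' ↑S)) := by
  unfold colRank Matrix.rank
  rw [range_submatrix_mulVecLin]

lemma inf_ker_eq_bot {n t k : ℕ} (hk : k ≤ t)
    (G0 : Matrix (Fin t) (Fin n) F) (hG0 : G0.rank = t)
    (M : Matrix (Fin k) (Fin t) F)
    (hmrsc : ∀ S : Finset (Fin n), S.card = k → colRank G0 S = k →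
      colRank (M * G0) S = k)
    (S : Finset (Fin n)) (hS : S.card = k) :
    Submodule.span F (G0ᵀ '' ↑S) ⊓ LinearMap.ker M.mulVecLin = ⊥ := by
  classical
  set colsS : Set (Fin t → F) := G0ᵀ '' ↑S with hcolsS
  obtain ⟨s, hs_sub, hs_span, hs_li⟩ := exists_linearIndependent F colsS
  have hst : s ⊆ Set.range G0ᵀ := hs_sub.trans (by rw [hcolsS]; exact Set.image_subset_range _ _)
  have hs_li' : LinearIndepOn F id s := hs_li
  set b : Set (Fin t → F) := hs_li'.extend hst with hb
  have hb_sub : b ⊆ Set.range G0ᵀ := hs_li'.extend_subset hst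
  have hsb : s ⊆ b := hs_li'.subset_extend hst
  have hb_li : LinearIndependent F ((↑) : b → (Fin t → F)) := hs_li'.linearIndepOn_extend hst
  have hb_span : Submodule.span F b = ⊤ := by
    have h1 : Submodule.span F (Set.range G0ᵀ) = ⊤ := by
      apply Submodule.eq_top_of_finrank_eq
      rw [show Set.range G0ᵀ = Set.range G0.col from rfl, ← Matrix.range_mulVecLin, Module.finrank_fin_fun]
      exact hG0
    have h2 : Set.range G0ᵀ ⊆ ↑(Submodule.span F b) := hs_li'.subset_span_extend hst
    exact top_unique (h1 ▸ Submodule.span_le.mpr h2)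
  -- finsets
  have hs_fin : s.Finite := ((Set.finite_range G0ᵀ).subset hst)
  have hb_fin : b.Finite := ((Set.finite_range G0ᵀ).subset hb_sub)
  set sf := hs_fin.toFinset with hsf
  set bf := hb_fin.toFinset with hbf
  have hsf_coe : (↑sf : Set (Fin t → F)) = s := hs_fin.coe_toFinset
  have hbf_coe : (↑bf : Set (Fin t → F)) = b := hb_fin.coe_toFinset
  have hsf_card : sf.card = finrank F (Submodule.span F s) := by
    have h := finrank_span_finset_eq_card (s := sf) (hs_li'.mono hsf_coe.subset)
    rw [hsf_coe] at h
    exact h.symm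
  have hbf_card : bf.card = t := by
    have h := finrank_span_finset_eq_card (s := bf) ((show LinearIndepOn F id b from hb_li).mono hbf_coe.subset)
    rw [hbf_coe, hb_span] at h
    rw [← h]
    simpa using (Module.finrank_fin_fun (R := F) (n := t))
  have hsk : sf.card ≤ k := by
    rw [hsf_card, hs_span, ← colRank_eq_finrank_span']
    calc colRank G0 S ≤ Fintype.card S := Matrix.rank_le_card_width _
    _ = k := by rw [Fintype.card_coe, hS]
  have hkt : k ≤ bf.card := by rw [hbf_card]; exact hk
  have hsfbf : sf ⊆ bf := by
    intro x hx
    rw [hsf, Set.Finite.mem_toFinset] at hx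
    rw [hbf, Set.Finite.mem_toFinset]
    exact hsb hx
  obtain ⟨cf, hscf, hcfb, hcf_card⟩ := Finset.exists_subsuperset_card_eq hsfbf hsk hkt
  have hcf_sub_b : (↑cf : Set (Fin t → F)) ⊆ b := by
    intro x hx
    have := hcfb hx
    rwa [hbf, Set.Finite.mem_toFinset] at this
  have hcf_li : LinearIndependent F ((↑) : (↑cf : Set (Fin t → F)) → (Fin t → F)) :=
    (show LinearIndepOn F id b from hb_li).mono hcf_sub_b
  -- pick indices
  have hchoice : ∀ v ∈ cf, ∃ j : Fin n, G0ᵀ j = v := by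
    intro v hv
    exact hb_sub (hcf_sub_b hv)
  choose ψ hψ using hchoice
  set S'' : Finset (Fin n) := cf.attach.image (fun v => ψ v.1 v.2) with hS''def
  have hS''_card : S''.card = k := by
    rw [hS''def, Finset.card_image_of_injective _ ?inj, Finset.card_attach, hcf_card]
    case inj =>
      intro v w hvw
      apply Subtype.ext
      rw [← hψ v.1 v.2, ← hψ w.1 w.2]
      exact congrArg G0ᵀ hvw
  have himg : G0ᵀ '' ↑S'' = ↑cf := by
    ext v
    constructor
    · rintro ⟨j, hj, rfl⟩
      rw [hS''def] at hj
      simp only [Finset.coe_image, Set.mem_image, Finset.mem_coe, Finset.mem_attach] at hj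
      obtain ⟨w, -, rfl⟩ := hj
      rw [hψ w.1 w.2]
      exact w.2
    · intro hv
      exact ⟨ψ v hv, by rw [hS''def]; exact Finset.mem_image.mpr ⟨⟨v, hv⟩, Finset.mem_attach _ _, rfl⟩, hψ v hv⟩
  have hU_rank : finrank F (Submodule.span F (G0ᵀ '' ↑S'')) = k := by
    rw [himg]
    have h := finrank_span_finset_eq_card (s := cf) hcf_li
    rw [h, hcf_card]
  have hcolRank'' : colRank G0 S'' = k := by
    rw [colRank_eq_finrank_span', hU_rank]
  have hMG := hmrsc S'' hS''_card hcolRank''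
  -- translate colRank (M*G0) S'' into finrank of image
  have hcol : ∀ j : Fin n, (M * G0)ᵀ j = M.mulVecLin (G0ᵀ j) := by
    intro j
    ext i
    simp [Matrix.mul_apply, Matrix.mulVec, dotProduct]
  have himg2 : (M * G0)ᵀ '' ↑S'' = M.mulVecLin '' (G0ᵀ '' ↑S'') := by
    exact (Set.image_congr (g := fun j => M.mulVecLin (G0ᵀ j)) fun j _ => hcol j).trans
      (Set.image_image _ _ _).symm
  have hmap_rank : finrank F ((Submodule.span F (G0ᵀ '' ↑S'')).map M.mulVecLin) = k := by
    rw [Submodule.map_span, ← himg2, ← colRank_eq_finrank_span']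
    exact hMG
  set U := Submodule.span F (G0ᵀ '' ↑S'') with hU
  have hsum := finrank_map_add (F := F) M.mulVecLin U
  rw [hmap_rank, hU_rank] at hsum
  have hinf0 : finrank F (U ⊓ LinearMap.ker M.mulVecLin : Submodule F (Fin t → F)) = 0 := by omega
  have hinfbot : U ⊓ LinearMap.ker M.mulVecLin = ⊥ := Submodule.finrank_eq_zero.mp hinf0
  -- conclude
  have hle : Submodule.span F colsS ≤ U := by
    rw [← hs_span, hU, himg]
    apply Submodule.span_mono
    intro x hx
    have hx' : x ∈ sf := (Set.Finite.mem_toFinset hs_fin).mpr hx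
    exact Finset.mem_coe.mpr (hscf hx')
  exact le_bot_iff.mp ((inf_le_inf_right _ hle).trans hinfbot.le)

end Aux3


/-- converse: if `C₀` has an `[n, t-Δ]` MRSC, then `C₀` has an extension
`[G0 | Q']` satisfying the rank condition of Lemma MRSC-via-shortening. -/
theorem mrsc_gives_extension {F : Type*} [Field F] [Fintype F]
    {n t Δ : ℕ} (hΔ : Δ < t)
    (G0 : Matrix (Fin t) (Fin n) F) (hG0 : G0.rank = t)
    (G : Matrix (Fin (t - Δ)) (Fin n) F) (hG : G.rank = t - Δ)
    (hsub : ∀ i, G i ∈ rowSpan G0)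
    (hmrsc : ∀ S : Finset (Fin n), S.card = t - Δ → colRank G0 S = t - Δ →
      colRank G S = t - Δ) :
    ∃ Q' : Matrix (Fin t) (Fin Δ) F, ∀ S : Finset (Fin n), S.card = t - Δ →
      (Matrix.fromCols (G0.submatrix id (fun j : S => (j : Fin n))) Q').rank =
        colRank G0 S + Δ := by
  classical
  -- build M with M * G0 = G
  have hM : ∃ M : Matrix (Fin (t - Δ)) (Fin t) F, M * G0 = G := by
    have h : ∀ i, ∃ c : Fin t → F, ∑ j, c j • G0 j = G i := by
      intro i
      exact (mem_span_range_iff_exists_fun F).mp (hsub i)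
    choose c hc using h
    refine ⟨Matrix.of c, ?_⟩
    ext i j
    rw [Matrix.mul_apply]
    have := congrFun (hc i) j
    simpa [Finset.sum_apply] using this
  obtain ⟨M, hMG⟩ := hM
  have hMrank : M.rank = t - Δ := by
    refine le_antisymm (Matrix.rank_le_height M) ?_
    calc t - Δ = G.rank := hG.symm
    _ = (M * G0).rank := by rw [hMG]
    _ ≤ M.rank := Matrix.rank_mul_le_left M G0
  set K := LinearMap.ker M.mulVecLin with hK
  have hKrank : finrank F K = Δ := by
    have h := LinearMap.finrank_range_add_finrank_ker M.mulVecLin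
    have h2 : finrank F (Fin t → F) = t := by
      simpa using (Module.finrank_fin_fun (R := F) (n := t))
    rw [h2] at h
    have h3 : finrank F (LinearMap.range M.mulVecLin) = t - Δ := hMrank
    rw [h3] at h
    rw [hK]
    omega
  let bK : Basis (Fin Δ) F K := Module.finBasisOfFinrankEq F K hKrank
  set Q' : Matrix (Fin t) (Fin Δ) F := Matrix.of (fun i j => (bK j : Fin t → F) i) with hQ'def
  have hQrange : LinearMap.range Q'.mulVecLin = K := by
    rw [Matrix.range_mulVecLin]
    have hr : Set.range Q'ᵀ = K.subtype '' Set.range bK := by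
      rw [← Set.range_comp]
      rfl
    rw [show Set.range Q'.col = Set.range Q'ᵀ from rfl, hr, ← Submodule.map_span, bK.span_eq, Submodule.map_subtype_top]
  refine ⟨Q', ?_⟩
  intro S hS
  have hsubrange := range_submatrix_mulVecLin G0 S
  have hrank_eq : (Matrix.fromCols (G0.submatrix id (fun j : S => (j : Fin n))) Q').rank =
      finrank F (Submodule.span F (G0ᵀ '' ↑S) ⊔ K : Submodule F (Fin t → F)) := by
    unfold Matrix.rank
    rw [range_fromColumns_mulVecLin, hsubrange, hQrange]
  rw [hrank_eq]
  have hinf : Submodule.span F (G0ᵀ '' ↑S) ⊓ K = ⊥ := by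
    refine inf_ker_eq_bot (Nat.sub_le t Δ) G0 hG0 M ?_ S hS
    intro T hT hcr
    rw [hMG]
    exact hmrsc T hT hcr
  have hsum := Submodule.finrank_sup_add_finrank_inf_eq (Submodule.span F (G0ᵀ '' ↑S)) K
  rw [hinf, finrank_bot, hKrank, ← colRank_eq_finrank_span'] at hsum
  omega
end
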